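/- Let n ≥ 4, let B be the (n−1)×(n−1) circulant matrix circ(3,1,0,…,0,1), and let Q be the n×n block matrix Q = [[n−1, 𝟏ᵀ],[𝟏, B]] (the signless Laplacian matrix of the wheel graph W_n). Let C = circ(1,0,…,0,1) of order n−1, X = 2(CCᵀ + I_{n−1})⁻¹((n−1)I_{n−1} − J_{n−1}), and H = (1/(4(n−1))) · [[5, −𝟏ᵀ],[−𝟏, J_{n−1} + 2X]]. Then H is the Moore–Penrose inverse of Q, i.e. Q H Q = Q, H Q H = H, (Q H)ᵀ = Q H, and (H Q)ᵀ = H Q. -/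

import Mathlib

open Matrix

noncomputable section

/-- The circulant matrix of order `m` with defining vector `v`:
its `(i,j)` entry is `v ((j - i) mod m)`. -/
def circ {m : ℕ} (v : Fin m → ℝ) : Matrix (Fin m) (Fin m) ℝ :=
  Matrix.of fun i j => v (j - i)

/-- The `m × m` all-ones matrix. -/
def Jmat (m : ℕ) : Matrix (Fin m) (Fin m) ℝ := Matrix.of fun _ _ => 1

namespace WheelAux

open Finset

variable {m : ℕ}

lemma circ_transpose [NeZero m] (v : Fin m → ℝ) :
    (circ v)ᵀ = circ fun d => v (-d) := by
  ext i j
  simp only [transpose_apply, circ, of_apply, neg_sub]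

lemma circ_mul [NeZero m] (u v : Fin m → ℝ) :
    circ u * circ v = circ fun d => ∑ t, u t * v (d - t) := by
  ext i j
  simp only [mul_apply, circ, of_apply]
  exact Fintype.sum_equiv (Equiv.subRight i) _ _ fun k => by
    simp [Equiv.subRight, sub_sub_sub_cancel_right]

lemma circ_add (u v : Fin m → ℝ) : circ u + circ v = circ fun d => u d + v d := by
  ext i j; simp [circ]

lemma one_eq_circ [NeZero m] :
    (1 : Matrix (Fin m) (Fin m) ℝ) = circ fun d => if d = 0 then 1 else 0 := by
  ext i j
  simp only [one_apply, circ, of_apply, sub_eq_zero]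
  by_cases h : i = j <;> simp [h, eq_comm]

lemma sum_circ_col [NeZero m] (v : Fin m → ℝ) (j : Fin m) :
    ∑ i, circ v i j = ∑ k, v k :=
  Fintype.sum_equiv (Equiv.subLeft j) _ _ fun i => rfl

lemma sum_circ_row [NeZero m] (v : Fin m → ℝ) (i : Fin m) :
    ∑ j, circ v i j = ∑ k, v k :=
  Fintype.sum_equiv (Equiv.subRight i) _ _ fun j => rfl

lemma fin_neg_one_val [NeZero m] : ((-1 : Fin m)).val = m - 1 := by
  have h1 : 1 ≤ m := Nat.one_le_iff_ne_zero.mpr (NeZero.ne m)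
  obtain ⟨k, hk⟩ : ∃ k, m = k + 1 := ⟨m - 1, by omega⟩
  subst hk
  simp [Fin.coe_neg_one]

lemma fin_facts [NeZero m] (hm : 3 ≤ m) :
    (0 : Fin m) ≠ 1 ∧ (0 : Fin m) ≠ -1 ∧ (1 : Fin m) ≠ -1 := by
  have v1 : (1 : Fin m).val = 1 := by
    rw [Fin.val_one']; exact Nat.mod_eq_of_lt (by omega)
  have vn : (-1 : Fin m).val = m - 1 := fin_neg_one_val
  refine ⟨fun h => ?_, fun h => ?_, fun h => ?_⟩ <;>
    · have := congrArg Fin.val h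
      simp only [Fin.val_zero, v1, vn] at this
      omega

end WheelAux

theorem wheel_signless_laplacian_moore_penrose (n : ℕ) (hn : 4 ≤ n)
    (B C X : Matrix (Fin (n-1)) (Fin (n-1)) ℝ)
    (hB : B = circ (fun k => if k.val = 0 then (3:ℝ) else
      if k.val = 1 ∨ k.val = n - 2 then 1 else 0))
    (hC : C = circ (fun k => if k.val = 0 ∨ k.val = n - 2 then (1:ℝ) else 0))
    (hX : X = (2:ℝ) • ((C * Cᵀ + 1)⁻¹ * (((n:ℝ) - 1) • (1 : Matrix (Fin (n-1)) (Fin (n-1)) ℝ) - Jmat (n-1))))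
    (Q : Matrix (Fin 1 ⊕ Fin (n-1)) (Fin 1 ⊕ Fin (n-1)) ℝ)
    (hQ : Q = Matrix.fromBlocks (Matrix.of fun _ _ => (n:ℝ) - 1) (Matrix.of fun _ _ => 1)
      (Matrix.of fun _ _ => 1) B)
    (H : Matrix (Fin 1 ⊕ Fin (n-1)) (Fin 1 ⊕ Fin (n-1)) ℝ)
    (hH : H = (1 / (4 * ((n:ℝ) - 1))) •
      Matrix.fromBlocks (Matrix.of fun _ _ => 5) (Matrix.of fun _ _ => -1)
        (Matrix.of fun _ _ => -1) (Jmat (n-1) + (2:ℝ) • X)) :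
    Q * H * Q = Q ∧ H * Q * H = H ∧ (Q * H)ᵀ = Q * H ∧ (H * Q)ᵀ = H * Q := by
  open WheelAux Finset in
  have hm : 3 ≤ n - 1 := by omega
  haveI : NeZero (n - 1) := ⟨by omega⟩
  obtain ⟨h01, h0n, h1n⟩ := fin_facts hm
  set r : ℝ := (n : ℝ) - 1 with hrdef
  have hr : ((n - 1 : ℕ) : ℝ) = r := by
    have : (1:ℕ) ≤ n := by omega
    push_cast [Nat.cast_sub this]; ring
  have hr3 : (3:ℝ) ≤ r := by
    have h4 : (4:ℝ) ≤ (n:ℝ) := by exact_mod_cast hn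
    rw [hrdef]; linarith
  have hr0 : r ≠ 0 := by linarith
  -- canonical vectors
  set bv : Fin (n-1) → ℝ := fun k => if k = 0 then 3 else if k = 1 ∨ k = -1 then 1 else 0 with hbv
  set cv : Fin (n-1) → ℝ := fun k => if k = 0 ∨ k = -1 then 1 else 0 with hcv
  have e0 : ∀ k : Fin (n-1), (k.val = 0) = (k = 0) := fun k => propext (by rw [Fin.ext_iff, Fin.val_zero])
  have e1 : ∀ k : Fin (n-1), (k.val = 1) = (k = (1 : Fin (n-1))) := fun k =>
    propext (by rw [Fin.ext_iff, Fin.val_one', Nat.mod_eq_of_lt (by omega)])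
  have en2 : ∀ k : Fin (n-1), (k.val = n - 2) = (k = (-1 : Fin (n-1))) := fun k =>
    propext (by rw [Fin.ext_iff, fin_neg_one_val]; omega)
  have hB' : B = circ bv := by
    rw [hB]; congr 1; funext k
    simp only [e0, e1, en2, hbv]
  have hC' : C = circ cv := by
    rw [hC]; congr 1; funext k
    simp only [e0, en2, hcv]
  -- sum of bv
  have sum_bv : ∑ k, bv k = 5 := by
    have hpt : ∀ t : Fin (n-1), bv t =
        (if t = 0 then (3:ℝ) else 0) + (if t = 1 then 1 else 0) + (if t = -1 then 1 else 0) := by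
      intro t
      by_cases h0 : t = 0
      · subst h0; simp [hbv, h01, h0n]
      · by_cases h1 : t = 1
        · subst h1; simp [hbv, Ne.symm h01, h1n]
        · by_cases h2 : t = -1
          · subst h2; simp [hbv, Ne.symm h0n, Ne.symm h1n]
          · simp [hbv, h0, h1, h2]
    rw [Finset.sum_congr rfl fun t _ => hpt t]
    simp [Finset.sum_add_distrib, Finset.sum_ite_eq']
    norm_num
  -- C * Cᵀ + 1 = B
  have sum_cv_mul : ∀ f : Fin (n-1) → ℝ, ∑ t, cv t * f t = f 0 + f (-1) := by
    intro f
    have hpt : ∀ t : Fin (n-1), cv t * f t =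
        (if t = 0 then f t else 0) + (if t = -1 then f t else 0) := by
      intro t
      by_cases h0 : t = 0
      · subst h0; simp [hcv, h0n]
      · by_cases h2 : t = -1
        · subst h2; simp [hcv, Ne.symm h0n]
        · simp [hcv, h0, h2]
    rw [Finset.sum_congr rfl fun t _ => hpt t]
    simp [Finset.sum_add_distrib, Finset.sum_ite_eq']
  have hCCt : C * Cᵀ + 1 = B := by
    rw [hC', circ_transpose, circ_mul, one_eq_circ, circ_add, hB']
    refine congrArg circ (funext fun d => ?_)
    have hconv : ∑ t, cv t * cv (t - d) = cv (0 - d) + cv (-1 - d) :=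
      sum_cv_mul (fun t => cv (t - d))
    simp only [neg_sub]
    rw [hconv, zero_sub]
    by_cases hd0 : d = 0
    · subst hd0
      simp [hcv, hbv, Ne.symm h0n, h0n]
      norm_num
    · by_cases hd1 : d = 1
      · subst hd1
        have hA : (-1 : Fin (n-1)) ≠ 0 := fun h => h01 (neg_eq_zero.mp h).symm
        have hB2 : (-1 - 1 : Fin (n-1)) ≠ 0 := by
          intro h; rw [sub_eq_zero] at h; exact h1n h.symm
        have hB3 : (-1 - 1 : Fin (n-1)) ≠ -1 := by
          intro h; rw [sub_eq_self] at h; exact h01 h.symm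
        simp [hcv, hbv, hA, hB2, hB3, Ne.symm h01, h1n]
      · by_cases hdn : d = -1
        · subst hdn
          have hA : (-(-1) : Fin (n-1)) = 1 := by rw [neg_neg]
          have hA1 : (1 : Fin (n-1)) ≠ 0 := Ne.symm h01
          have hB2 : (-1 - (-1) : Fin (n-1)) = 0 := by rw [sub_self]
          simp [hcv, hbv, hA, hA1, h1n, hB2, Ne.symm h0n]
        · have hA : (-d : Fin (n-1)) ≠ 0 := by simpa [neg_eq_zero] using hd0
          have hA2 : (-d : Fin (n-1)) ≠ -1 := by
            intro h; exact hd1 (neg_inj.mp h)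
          have hB2 : (-1 - d : Fin (n-1)) ≠ 0 := by
            intro h; rw [sub_eq_zero] at h; exact hdn h.symm
          have hB3 : (-1 - d : Fin (n-1)) ≠ -1 := by
            intro h; rw [sub_eq_self] at h; exact hd0 h
          simp [hcv, hbv, hA, hA2, hB2, hB3, hd0, hd1, hdn]
  -- B is positive definite hence invertible
  have hBpd : B.PosDef := by
    rw [← hCCt]
    have h1 : (C * Cᵀ).PosSemidef := by
      have := Matrix.posSemidef_self_mul_conjTranspose C
      rwa [Matrix.conjTranspose_eq_transpose_of_trivial] at this
    exact Matrix.PosDef.posSemidef_add h1 Matrix.PosDef.one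
  have hBdet : IsUnit B.det := hBpd.det_pos.ne'.isUnit
  have hBBinv : B * B⁻¹ = 1 := Matrix.mul_nonsing_inv B hBdet
  -- J identities
  have hJJ : Jmat (n-1) * Jmat (n-1) = r • Jmat (n-1) := by
    ext i j
    simp [Jmat, mul_apply, Finset.sum_const, hr]
  have hBJ : B * Jmat (n-1) = (5:ℝ) • Jmat (n-1) := by
    ext i j
    simp only [hB', Jmat, mul_apply, of_apply, mul_one, Matrix.smul_apply, smul_eq_mul]
    rw [sum_circ_row, sum_bv]; try ring
  have hJB : Jmat (n-1) * B = (5:ℝ) • Jmat (n-1) := by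
    ext i j
    simp only [hB', Jmat, mul_apply, of_apply, one_mul, Matrix.smul_apply, smul_eq_mul]
    rw [sum_circ_col, sum_bv]; try ring
  have hBX : B * X = (2:ℝ) • (r • 1 - Jmat (n-1)) := by
    rw [hX, hCCt, Matrix.mul_smul, ← mul_assoc, hBBinv, one_mul]
  have hJBinv : Jmat (n-1) * B⁻¹ = (5:ℝ)⁻¹ • Jmat (n-1) := by
    have h5 : Jmat (n-1) = (5:ℝ)⁻¹ • (Jmat (n-1) * B) := by
      rw [hJB, smul_smul]; norm_num
    conv_lhs => rw [h5]
    rw [Matrix.smul_mul, mul_assoc, hBBinv, mul_one]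
  have hJX : Jmat (n-1) * X = 0 := by
    rw [hX, hCCt, Matrix.mul_smul, ← mul_assoc, hJBinv, Matrix.smul_mul, mul_sub,
      Matrix.mul_smul, mul_one, hJJ, sub_self, smul_zero, smul_zero]
  have hXcol : ∀ j, ∑ i, X i j = 0 := by
    intro j
    have h := congrFun (congrFun hJX ⟨0, by omega⟩) j
    simpa [Jmat, mul_apply] using h
  -- block computation : Q * H = 1
  have hQH : Q * H = 1 := by
    rw [hQ, hH, Matrix.mul_smul, Matrix.fromBlocks_multiply]
    have hT1 : (Matrix.of fun _ _ => r : Matrix (Fin 1) (Fin 1) ℝ) *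
        (Matrix.of fun _ _ => (5:ℝ)) +
        (Matrix.of fun _ _ => (1:ℝ) : Matrix (Fin 1) (Fin (n-1)) ℝ) *
        (Matrix.of fun _ _ => (-1:ℝ) : Matrix (Fin (n-1)) (Fin 1) ℝ) =
        ((4*r) • 1 : Matrix (Fin 1) (Fin 1) ℝ) := by
      ext i j
      have hij : i = j := Subsingleton.elim i j
      simp [mul_apply, Finset.sum_const, hij, hr, Matrix.one_apply]
      push_cast [hr]
      ring
    have hT2 : (Matrix.of fun _ _ => r : Matrix (Fin 1) (Fin 1) ℝ) *
        (Matrix.of fun _ _ => (-1:ℝ) : Matrix (Fin 1) (Fin (n-1)) ℝ) +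
        (Matrix.of fun _ _ => (1:ℝ) : Matrix (Fin 1) (Fin (n-1)) ℝ) *
        (Jmat (n-1) + (2:ℝ) • X) =
        (0 : Matrix (Fin 1) (Fin (n-1)) ℝ) := by
      ext i j
      simp [mul_apply, Jmat, Finset.sum_add_distrib, Finset.sum_const, ← Finset.mul_sum, hXcol j, hr]
    have hT3 : (Matrix.of fun _ _ => (1:ℝ) : Matrix (Fin (n-1)) (Fin 1) ℝ) *
        (Matrix.of fun _ _ => (5:ℝ) : Matrix (Fin 1) (Fin 1) ℝ) +
        B * (Matrix.of fun _ _ => (-1:ℝ) : Matrix (Fin (n-1)) (Fin 1) ℝ) =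
        (0 : Matrix (Fin (n-1)) (Fin 1) ℝ) := by
      ext i j
      simp only [Matrix.add_apply, mul_apply, of_apply, Matrix.zero_apply]
      rw [Fin.sum_univ_one]
      have : ∑ k, B i k * (-1) = -∑ k, B i k := by rw [← Finset.sum_neg_distrib]; simp
      rw [this, hB', sum_circ_row, sum_bv]
      norm_num
    have hT4 : (Matrix.of fun _ _ => (1:ℝ) : Matrix (Fin (n-1)) (Fin 1) ℝ) *
        (Matrix.of fun _ _ => (-1:ℝ) : Matrix (Fin 1) (Fin (n-1)) ℝ) +
        B * (Jmat (n-1) + (2:ℝ) • X) =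
        ((4*r) • 1 : Matrix (Fin (n-1)) (Fin (n-1)) ℝ) := by
      have hmo : (Matrix.of fun _ _ => (1:ℝ) : Matrix (Fin (n-1)) (Fin 1) ℝ) *
          (Matrix.of fun _ _ => (-1:ℝ) : Matrix (Fin 1) (Fin (n-1)) ℝ) = -Jmat (n-1) := by
        ext i j
        simp [mul_apply, Jmat]
      rw [hmo, mul_add, hBJ, Matrix.mul_smul, hBX]
      module
    rw [hT1, hT2, hT3, hT4]
    have hFB : Matrix.fromBlocks ((4*r) • (1 : Matrix (Fin 1) (Fin 1) ℝ)) 0 0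
        ((4*r) • (1 : Matrix (Fin (n-1)) (Fin (n-1)) ℝ)) =
        (4*r) • (1 : Matrix (Fin 1 ⊕ Fin (n-1)) (Fin 1 ⊕ Fin (n-1)) ℝ) := by
      rw [← Matrix.fromBlocks_one]
      ext (i|i) (j|j) <;> simp [Matrix.fromBlocks]
    rw [hFB, smul_smul]
    have : 1 / (4 * r) * (4 * r) = 1 := by field_simp
    rw [this, one_smul]
  have hHQ : H * Q = 1 := mul_eq_one_comm.mp hQH
  refine ⟨?_, ?_, ?_, ?_⟩
  · rw [hQH, one_mul]
  · rw [hHQ, one_mul]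
  · rw [hQH, Matrix.transpose_one]
  · rw [hHQ, Matrix.transpose_one]
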